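/- For every n > 0, the number of regular elements of the lattice D_n^B (elements h with (h^c)^c = h, where h^c is the pseudocomplement) is exactly 2^n. -/
import Mathlib


/-- Height sequences of Dyck paths of type B of semilength `n` (written 0-indexed):
lists `(h_1, …, h_k)` with `1 ≤ k ≤ n`, `h_i ≥ i` for `i ∈ [k]`,
`h_1 ≤ h_2 ≤ … ≤ h_{k-1} ≤ 2n - k`, and `h_k ∈ {2n - k, 2n - k + 1}`. -/
def IsHeightSeqB (n : ℕ) (h : List ℕ) : Prop :=
  1 ≤ h.length ∧ h.length ≤ n ∧
    (∀ i < h.length, i + 1 ≤ h.getD i 0) ∧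
    (∀ i : ℕ, i + 2 < h.length → h.getD i 0 ≤ h.getD (i + 1) 0) ∧
    (2 ≤ h.length → h.getD (h.length - 2) 0 ≤ 2 * n - h.length) ∧
    (h.getD (h.length - 1) 0 = 2 * n - h.length ∨
      h.getD (h.length - 1) 0 = 2 * n - h.length + 1)

/-- The dominance order on height sequences of type B:
`(h_1, …, h_k) ≤_D (h'_1, …, h'_{k'})` iff `k ≥ k'` and `h_i ≤ h'_i` for all `i ∈ [k']`. -/
def DomLeB (a b : List ℕ) : Prop :=
  b.length ≤ a.length ∧ ∀ j < b.length, a.getD j 0 ≤ b.getD j 0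

/-- The `j`-th entry (0-indexed) of the meet `a ∧_D b` in `D_n^B`. -/
def meetEntryB (a b : List ℕ) (j : ℕ) : ℕ :=
  if j < a.length then
    (if j < b.length then min (a.getD j 0) (b.getD j 0) else a.getD j 0)
  else b.getD j 0

/-- `a ∧_D b ≤_D c` in `D_n^B`, via the explicit description of the meet. -/
def MeetLeB (a b c : List ℕ) : Prop :=
  c.length ≤ max a.length b.length ∧ ∀ j < c.length, meetEntryB a b j ≤ c.getD j 0

/-- The least element `(1, 2, …, n)` of `D_n^B`. -/
def botB (n : ℕ) : List ℕ :=
  List.ofFn (fun i : Fin n => (i : ℕ) + 1)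

/-- `z` is the pseudocomplement of `x` in `D_n^B`: the greatest element `z` of `D_n^B`
with `x ∧_D z ≤_D (1, 2, …, n)`. -/
def IsPseudocomplementB (n : ℕ) (x z : List ℕ) : Prop :=
  IsHeightSeqB n z ∧ MeetLeB x z (botB n) ∧
    ∀ w : List ℕ, IsHeightSeqB n w → MeetLeB x w (botB n) → DomLeB w z


-- ===== auxiliary development =====

/-- auxiliary: smallest `w+1` with `w ∈ W`, `j ≤ w < n`; defaults to `n`. -/
def nvB (W : Finset ℕ) (n j : ℕ) : ℕ :=
  if j < n then (if j ∈ W then j + 1 else nvB W n (j + 1)) else n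
termination_by n - j

lemma nvB_of_mem {W : Finset ℕ} {n j : ℕ} (h : j < n) (hm : j ∈ W) :
    nvB W n j = j + 1 := by rw [nvB]; simp [h, hm]

lemma nvB_of_notMem {W : Finset ℕ} {n j : ℕ} (h : j < n) (hm : j ∉ W) :
    nvB W n j = nvB W n (j + 1) := by rw [nvB]; simp [h, hm]

lemma nvB_of_ge {W : Finset ℕ} {n j : ℕ} (h : n ≤ j) : nvB W n j = n := by
  rw [nvB]; simp [Nat.not_lt.mpr h]

lemma nvB_ge' {W : Finset ℕ} {n : ℕ} : ∀ j, j ≤ n → j ≤ nvB W n j := by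
  have H : ∀ d j, n - j ≤ d → j ≤ n → j ≤ nvB W n j := by
    intro d
    induction d with
    | zero => intro j h1 h2
              have : j = n := by omega
              subst this; rw [nvB_of_ge le_rfl]
    | succ d ih =>
      intro j h1 h2
      rcases eq_or_lt_of_le h2 with h | h
      · subst h; rw [nvB_of_ge le_rfl]
      · by_cases hm : j ∈ W
        · rw [nvB_of_mem h hm]; omega
        · rw [nvB_of_notMem h hm]
          have := ih (j + 1) (by omega) (by omega)
          omega
  intro j hj; exact H (n - j) j le_rfl hj

lemma nvB_ge {W : Finset ℕ} {n j : ℕ} (h : j < n) : j + 1 ≤ nvB W n j := by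
  by_cases hm : j ∈ W
  · rw [nvB_of_mem h hm]
  · rw [nvB_of_notMem h hm]; exact nvB_ge' (j + 1) h

lemma nvB_le {W : Finset ℕ} {n : ℕ} (HW : ∀ w ∈ W, w + 1 < n) :
    ∀ j, nvB W n j ≤ n := by
  have H : ∀ d j, n - j ≤ d → nvB W n j ≤ n := by
    intro d
    induction d with
    | zero => intro j h1; rw [nvB_of_ge (by omega)]
    | succ d ih =>
      intro j h1
      rcases Nat.lt_or_ge j n with h | h
      · by_cases hm : j ∈ W
        · rw [nvB_of_mem h hm]; exact le_of_lt (HW j hm)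
        · rw [nvB_of_notMem h hm]; exact ih (j + 1) (by omega)
      · rw [nvB_of_ge h]
  intro j; exact H (n - j) j le_rfl

lemma nvB_le_of_mem {W : Finset ℕ} {n : ℕ} {w : ℕ} (hw : w ∈ W) (hwn : w < n) :
    ∀ j, j ≤ w → nvB W n j ≤ w + 1 := by
  have H : ∀ d j, w - j ≤ d → j ≤ w → nvB W n j ≤ w + 1 := by
    intro d
    induction d with
    | zero => intro j h1 h2
              have : j = w := by omega
              subst this; rw [nvB_of_mem hwn hw]
    | succ d ih =>
      intro j h1 h2
      rcases eq_or_lt_of_le h2 with h | h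
      · subst h; rw [nvB_of_mem hwn hw]
      · by_cases hm : j ∈ W
        · rw [nvB_of_mem (by omega) hm]; omega
        · rw [nvB_of_notMem (by omega) hm]; exact ih (j + 1) (by omega) (by omega)
  intro j hj; exact H (w - j) j le_rfl hj

lemma nvB_spec {W : Finset ℕ} {n : ℕ} :
    ∀ j, nvB W n j = n ∨ ∃ w ∈ W, j ≤ w ∧ w < n ∧ nvB W n j = w + 1 := by
  have H : ∀ d j, n - j ≤ d →
      nvB W n j = n ∨ ∃ w ∈ W, j ≤ w ∧ w < n ∧ nvB W n j = w + 1 := by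
    intro d
    induction d with
    | zero => intro j h1; left; exact nvB_of_ge (by omega)
    | succ d ih =>
      intro j h1
      rcases Nat.lt_or_ge j n with h | h
      · by_cases hm : j ∈ W
        · right; exact ⟨j, hm, le_rfl, h, nvB_of_mem h hm⟩
        · rw [nvB_of_notMem h hm]
          rcases ih (j + 1) (by omega) with h' | ⟨w, hw, hjw, hwn, he⟩
          · left; exact h'
          · right; exact ⟨w, hw, by omega, hwn, he⟩
      · left; exact nvB_of_ge h
  intro j; exact H (n - j) j le_rfl

lemma nvB_gt_of_notMem {W : Finset ℕ} {n j : ℕ} (h : j + 1 < n) (hm : j ∉ W) :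
    j + 1 < nvB W n j := by
  rcases nvB_spec (W := W) (n := n) j with h' | ⟨w, hw, hjw, hwn, he⟩
  · omega
  · have : j ≠ w := fun e => hm (e ▸ hw)
    omega

def wB (n : ℕ) (S : Finset ℕ) : Finset ℕ := S.filter (fun w => w < n - 1)
def mB (n : ℕ) (S : Finset ℕ) : ℕ := (wB n S).sup (fun w => w + 1)
def ph0 (n : ℕ) (W : Finset ℕ) : List ℕ := List.ofFn (fun j : Fin n => nvB W n j)
def ph1 (n : ℕ) (W : Finset ℕ) : List ℕ :=
  List.ofFn (fun j : Fin n => if (j : ℕ) = n - 1 then n + 1 else nvB W n j)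
def phS (n m : ℕ) (W : Finset ℕ) : List ℕ :=
  List.ofFn (fun j : Fin (m + 1) => if (j : ℕ) = m then 2 * n - m else nvB W n j)
def phiB (n : ℕ) (S : Finset ℕ) : List ℕ :=
  if n - 1 ∈ S then
    (if mB n S = n - 1 then ph1 n (wB n S) else phS n (mB n S) (wB n S))
  else ph0 n (wB n S)
def smB (n : ℕ) (x : List ℕ) : Finset ℕ :=
  ((Finset.range (n - 1)).filter (fun w => x.length ≤ w ∨ w + 1 < x.getD w 0)) ∪
    (if x.length = n ∧ x.getD (n - 1) 0 = n then {n - 1} else ∅)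

lemma getD_ofFn {n : ℕ} (f : Fin n → ℕ) {i : ℕ} (h : i < n) :
    (List.ofFn f).getD i 0 = f ⟨i, h⟩ := by
  rw [List.getD_eq_getElem _ _ (by simpa using h)]
  simp

lemma botB_length (n : ℕ) : (botB n).length = n := by simp [botB]

lemma botB_getD {n j : ℕ} (h : j < n) : (botB n).getD j 0 = j + 1 := by
  rw [botB, getD_ofFn _ h]

lemma chainMono {x : List ℕ}
    (hx : ∀ i : ℕ, i + 2 < x.length → x.getD i 0 ≤ x.getD (i + 1) 0) :
    ∀ i j, i ≤ j → j + 2 ≤ x.length → x.getD i 0 ≤ x.getD j 0 := by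
  intro i j hij
  induction j, hij using Nat.le_induction with
  | base => intro _; exact le_rfl
  | succ j hij ih => intro h; exact le_trans (ih (by omega)) (hx j (by omega))

lemma last_ge {n : ℕ} {x : List ℕ} (hx : IsHeightSeqB n x) :
    2 * n - x.length ≤ x.getD (x.length - 1) 0 := by
  rcases hx.2.2.2.2.2 with h | h <;> omega

lemma last_le {n : ℕ} {x : List ℕ} (hx : IsHeightSeqB n x) :
    x.getD (x.length - 1) 0 ≤ 2 * n - x.length + 1 := by
  rcases hx.2.2.2.2.2 with h | h <;> omega

lemma mB_le {n : ℕ} {S : Finset ℕ} : mB n S ≤ n - 1 := by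
  apply Finset.sup_le
  intro w hw
  have := (Finset.mem_filter.mp hw).2
  omega

lemma le_mB {n : ℕ} {S : Finset ℕ} {w : ℕ} (hw : w ∈ wB n S) : w + 1 ≤ mB n S :=
  Finset.le_sup (f := fun w => w + 1) hw

lemma mB_mem {n : ℕ} {S : Finset ℕ} (h : mB n S ≠ 0) : mB n S - 1 ∈ wB n S := by
  have hne : (wB n S).Nonempty := by
    rcases Finset.eq_empty_or_nonempty (wB n S) with he | hne
    · exfalso; apply h; simp [mB, he]
    · exact hne
  obtain ⟨b, hb, he⟩ := Finset.exists_mem_eq_sup (wB n S) hne (fun w => w + 1)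
  have : mB n S = b + 1 := he
  rw [this]; simpa using hb

lemma wB_mem_lt {n : ℕ} {S : Finset ℕ} {w : ℕ} (hw : w ∈ wB n S) : w < n - 1 :=
  (Finset.mem_filter.mp hw).2

lemma nvB_mono {W : Finset ℕ} {n : ℕ} (HW : ∀ w ∈ W, w + 1 < n) (i : ℕ) :
    nvB W n i ≤ nvB W n (i + 1) := by
  rcases nvB_spec (W := W) (n := n) (i + 1) with h | ⟨w, hw, hiw, hwn, he⟩
  · rw [h]; exact nvB_le HW i
  · rw [he]; exact nvB_le_of_mem hw hwn i (by omega)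

lemma nvB_top {W : Finset ℕ} {n : ℕ} (HW : ∀ w ∈ W, w + 1 < n) :
    nvB W n (n - 1) = n := by
  rcases Nat.eq_zero_or_pos n with h | h
  · subst h; exact nvB_of_ge le_rfl
  · rw [nvB_of_notMem (by omega) (fun hm => by have := HW _ hm; omega),
      nvB_of_ge (by omega)]

lemma ph0_length {n : ℕ} {W : Finset ℕ} : (ph0 n W).length = n := by simp [ph0]
lemma ph1_length {n : ℕ} {W : Finset ℕ} : (ph1 n W).length = n := by simp [ph1]
lemma phS_length {n m : ℕ} {W : Finset ℕ} : (phS n m W).length = m + 1 := by simp [phS]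

lemma ph0_getD {n : ℕ} {W : Finset ℕ} {j : ℕ} (h : j < n) :
    (ph0 n W).getD j 0 = nvB W n j := by rw [ph0, getD_ofFn _ h]
lemma ph1_getD {n : ℕ} {W : Finset ℕ} {j : ℕ} (h : j < n) :
    (ph1 n W).getD j 0 = if j = n - 1 then n + 1 else nvB W n j := by
  rw [ph1, getD_ofFn _ h]
lemma phS_getD {n m : ℕ} {W : Finset ℕ} {j : ℕ} (h : j < m + 1) :
    (phS n m W).getD j 0 = if j = m then 2 * n - m else nvB W n j := by
  rw [phS, getD_ofFn _ h]

lemma isHeight_ph0 {n : ℕ} {W : Finset ℕ} (hn : 1 ≤ n) (HW : ∀ w ∈ W, w + 1 < n) :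
    IsHeightSeqB n (ph0 n W) := by
  refine ⟨by rw [ph0_length]; omega, by rw [ph0_length], ?_, ?_, ?_, ?_⟩
  · intro i hi; rw [ph0_length] at hi; rw [ph0_getD hi]; exact nvB_ge hi
  · intro i hi; rw [ph0_length] at hi
    rw [ph0_getD (by omega), ph0_getD (by omega)]; exact nvB_mono HW i
  · intro h2; rw [ph0_length] at h2 ⊢
    rw [ph0_getD (by omega)]
    have := nvB_le HW (n - 2); omega
  · left; rw [ph0_length, ph0_getD (by omega), nvB_top HW]; omega

lemma isHeight_ph1 {n : ℕ} {W : Finset ℕ} (hn : 1 ≤ n) (HW : ∀ w ∈ W, w + 1 < n) :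
    IsHeightSeqB n (ph1 n W) := by
  refine ⟨by rw [ph1_length]; omega, by rw [ph1_length], ?_, ?_, ?_, ?_⟩
  · intro i hi; rw [ph1_length] at hi; rw [ph1_getD hi]
    split
    · omega
    · exact nvB_ge hi
  · intro i hi; rw [ph1_length] at hi
    rw [ph1_getD (by omega), ph1_getD (by omega),
      if_neg (by omega : ¬ i = n - 1), if_neg (by omega : ¬ i + 1 = n - 1)]
    exact nvB_mono HW i
  · intro h2; rw [ph1_length] at h2 ⊢
    rw [ph1_getD (by omega), if_neg (by omega : ¬ n - 2 = n - 1)]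
    have := nvB_le HW (n - 2); omega
  · right; rw [ph1_length, ph1_getD (by omega), if_pos rfl]; omega

lemma isHeight_phS {n m : ℕ} {W : Finset ℕ} (HW : ∀ w ∈ W, w + 1 < n) (hm2 : m + 2 ≤ n)
    (hmem : m ≠ 0 → m - 1 ∈ W) : IsHeightSeqB n (phS n m W) := by
  refine ⟨by rw [phS_length]; omega, by rw [phS_length]; omega, ?_, ?_, ?_, ?_⟩
  · intro i hi; rw [phS_length] at hi; rw [phS_getD hi]
    split
    · omega
    · exact nvB_ge (by omega)
  · intro i hi; rw [phS_length] at hi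
    rw [phS_getD (by omega), phS_getD (by omega),
      if_neg (by omega : ¬ i = m), if_neg (by omega : ¬ i + 1 = m)]
    exact nvB_mono HW i
  · intro h2; rw [phS_length] at h2 ⊢
    rw [phS_getD (by omega), if_neg (by omega : ¬ m + 1 - 2 = m)]
    have hm1 : m ≠ 0 := by omega
    have h3 := nvB_le_of_mem (n := n) (w := m - 1) (hmem hm1) (by omega) (m + 1 - 2) (by omega)
    omega
  · right; rw [phS_length, phS_getD (by omega)]
    rw [if_pos (by omega : m + 1 - 1 = m)]; omega

lemma mem_wB_smB {n : ℕ} {x : List ℕ} {w : ℕ} :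
    w ∈ wB n (smB n x) ↔ (w < n - 1 ∧ (x.length ≤ w ∨ w + 1 < x.getD w 0)) := by
  unfold wB smB
  by_cases hf : (x.length = n ∧ x.getD (n - 1) 0 = n)
  · simp only [if_pos hf, Finset.mem_filter, Finset.mem_union, Finset.mem_range,
      Finset.mem_singleton]
    constructor
    · rintro ⟨h1 | h1, h2⟩
      · exact ⟨h2, h1.2⟩
      · omega
    · rintro ⟨h1, h2⟩; exact ⟨Or.inl ⟨h1, h2⟩, h1⟩
  · simp only [if_neg hf, Finset.mem_filter, Finset.mem_union, Finset.mem_range,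
      Finset.notMem_empty, or_false]
    constructor
    · rintro ⟨h1, h2⟩; exact ⟨h2, h1.2⟩
    · rintro ⟨h1, h2⟩; exact ⟨⟨h1, h2⟩, h1⟩

lemma mem_smB_top {n : ℕ} {x : List ℕ} (hn : 1 ≤ n) :
    (n - 1 ∈ smB n x) ↔ (x.length = n ∧ x.getD (n - 1) 0 = n) := by
  unfold smB
  by_cases hf : (x.length = n ∧ x.getD (n - 1) 0 = n)
  · rw [if_pos hf]
    exact ⟨fun _ => hf,
      fun _ => Finset.mem_union_right _ (Finset.mem_singleton_self _)⟩
  · simp only [if_neg hf, Finset.union_empty, Finset.mem_filter, Finset.mem_range]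
    constructor
    · intro h; omega
    · intro h; exact absurd h hf

lemma meetEntry_min {a b : List ℕ} {j : ℕ} (ha : j < a.length) (hb : j < b.length) :
    meetEntryB a b j = min (a.getD j 0) (b.getD j 0) := by
  unfold meetEntryB; rw [if_pos ha, if_pos hb]

lemma meetEntry_left {a b : List ℕ} {j : ℕ} (ha : j < a.length) (hb : b.length ≤ j) :
    meetEntryB a b j = a.getD j 0 := by
  unfold meetEntryB; rw [if_pos ha, if_neg (by omega)]

lemma meetEntry_right {a b : List ℕ} {j : ℕ} (ha : a.length ≤ j) :
    meetEntryB a b j = b.getD j 0 := by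
  unfold meetEntryB; rw [if_neg (by omega)]

lemma meetB_facts {n : ℕ} {x w : List ℕ} (hm : MeetLeB x w (botB n)) :
    n ≤ max x.length w.length ∧ ∀ j < n, meetEntryB x w j ≤ j + 1 := by
  obtain ⟨hm1, hm2⟩ := hm
  rw [botB_length] at hm1
  refine ⟨hm1, fun j hj => ?_⟩
  have := hm2 j (by rw [botB_length]; exact hj)
  rwa [botB_getD hj] at this

lemma keyW {n : ℕ} {x w : List ℕ}
    (hw : IsHeightSeqB n w) (hm : MeetLeB x w (botB n)) :
    ∀ j' ∈ wB n (smB n x), j' + 2 ≤ w.length ∧ ∀ j ≤ j', w.getD j 0 ≤ j' + 1 := by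
  obtain ⟨hm1, hm2'⟩ := meetB_facts hm
  have hmx : n ≤ x.length ∨ n ≤ w.length := le_max_iff.mp hm1
  intro j' hj'
  obtain ⟨hj'n, hA⟩ := mem_wB_smB.mp hj'
  have h1 : j' < w.length := by
    by_contra hc
    push_neg at hc
    have hj'x : j' < x.length := by rcases hmx with h | h <;> omega
    have := hm2' j' (by omega)
    rw [meetEntry_left hj'x hc] at this
    rcases hA with h | h <;> omega
  have h2 : w.getD j' 0 ≤ j' + 1 := by
    rcases hA with h | h
    · have := hm2' j' (by omega); rwa [meetEntry_right h] at this
    · rcases Nat.lt_or_ge j' x.length with h' | h'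
      · have := hm2' j' (by omega)
        rw [meetEntry_min h' h1] at this
        rcases min_le_iff.mp this with h'' | h'' <;> omega
      · have := hm2' j' (by omega); rwa [meetEntry_right h'] at this
  have h3 : j' + 2 ≤ w.length := by
    by_contra hc
    push_neg at hc
    have he : j' = w.length - 1 := by omega
    have hlg := last_ge hw
    rw [← he] at hlg
    have hwn := hw.2.1
    omega
  exact ⟨h3, fun j hj => le_trans (chainMono hw.2.2.2.1 j j' hj h3) h2⟩

lemma core0 {n : ℕ} (hn : 1 ≤ n) {x : List ℕ} (hx : IsHeightSeqB n x)
    (hflag : ¬(x.length = n ∧ x.getD (n - 1) 0 = n)) :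
    IsPseudocomplementB n x (ph0 n (wB n (smB n x))) := by
  obtain ⟨hk1, hkn, hup, hmono, hpen, hlast⟩ := hx
  have HW : ∀ w ∈ wB n (smB n x), w + 1 < n := fun w hw => by
    have := wB_mem_lt hw; omega
  have hxn1 : x.length = n → x.getD (n - 1) 0 = n + 1 := by
    intro h
    rcases hlast with h' | h'
    · rw [h] at h'
      have : x.getD (n - 1) 0 = n := by omega
      exact absurd ⟨h, this⟩ hflag
    · rw [h] at h'; omega
  refine ⟨isHeight_ph0 hn HW, ⟨?_, ?_⟩, ?_⟩
  · rw [botB_length, ph0_length]; exact le_max_right _ _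
  · intro j hj
    rw [botB_length] at hj
    rw [botB_getD hj]
    have hzle : (x.length ≤ j ∨ j + 1 < x.getD j 0) → nvB (wB n (smB n x)) n j ≤ j + 1 := by
      intro hA
      rcases Nat.lt_or_ge j (n - 1) with h | h
      · rw [nvB_of_mem hj (mem_wB_smB.mpr ⟨h, hA⟩)]
      · have he : j = n - 1 := by omega
        rw [he, nvB_top HW]; omega
    rcases Nat.lt_or_ge j x.length with hjx | hjx
    · rw [meetEntry_min hjx (by rw [ph0_length]; exact hj), ph0_getD hj]
      rcases Nat.lt_or_ge (j + 1) (x.getD j 0) with h | h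
      · exact le_trans (min_le_right _ _) (hzle (Or.inr h))
      · exact le_trans (min_le_left _ _) h
    · rw [meetEntry_right hjx, ph0_getD hj]
      exact hzle (Or.inl hjx)
  · intro w hw hm
    obtain ⟨hm1, hm2⟩ := meetB_facts hm
    have hKey := keyW (n := n) hw hm
    have hk'n : w.length = n := by
      by_contra hc
      have hk'lt : w.length < n := by have := hw.2.1; omega
      have hxl : x.length = n := by rcases le_max_iff.mp hm1 with h | h <;> omega
      have hx1 := hxn1 hxl
      have h2 := hm2 (n - 1) (by omega)
      rw [meetEntry_left (by omega) (by omega)] at h2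
      omega
    refine ⟨by rw [ph0_length, hk'n], ?_⟩
    intro j hj
    rw [ph0_length] at hj
    rw [ph0_getD hj]
    rcases Nat.lt_or_ge j (n - 1) with hj1 | hj1
    · rcases nvB_spec (W := wB n (smB n x)) (n := n) j with hs | ⟨w', hw', hjw', hw'n, he⟩
      · rw [hs]
        have hch := chainMono hw.2.2.2.1 j (n - 2) (by omega) (by omega)
        have hp := hw.2.2.2.2.1 (by omega)
        rw [hk'n] at hp
        omega
      · rw [he]
        exact (hKey w' hw').2 j hjw'
    · have hje : j = n - 1 := by omega
      rw [hje, nvB_top HW]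
      rcases Nat.lt_or_ge (n - 1) x.length with hx1 | hx1
      · have hxl : x.length = n := by omega
        have h2 := hm2 (n - 1) (by omega)
        rw [meetEntry_min hx1 (by omega)] at h2
        have hx2 := hxn1 hxl
        rcases min_le_iff.mp h2 with h | h <;> omega
      · have h2 := hm2 (n - 1) (by omega)
        rw [meetEntry_right hx1] at h2
        omega

lemma core1 {n : ℕ} (hn : 1 ≤ n) {x : List ℕ} (hx : IsHeightSeqB n x)
    (hflag : x.length = n ∧ x.getD (n - 1) 0 = n)
    (hmt : mB n (smB n x) = n - 1) :
    IsPseudocomplementB n x (ph1 n (wB n (smB n x))) := by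
  obtain ⟨hk1, hkn, hup, hmono, hpen, hlast⟩ := hx
  have HW : ∀ w ∈ wB n (smB n x), w + 1 < n := fun w hw => by
    have := wB_mem_lt hw; omega
  refine ⟨isHeight_ph1 hn HW, ⟨?_, ?_⟩, ?_⟩
  · rw [botB_length, ph1_length]; exact le_max_right _ _
  · intro j hj
    rw [botB_length] at hj
    rw [botB_getD hj]
    have hjx : j < x.length := by omega
    rw [meetEntry_min hjx (by rw [ph1_length]; exact hj)]
    rcases Nat.lt_or_ge (j + 1) (x.getD j 0) with h | h
    · have hj1 : j < n - 1 := by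
        rcases Nat.lt_or_ge j (n - 1) with h' | h'
        · exact h'
        · have hje : j = n - 1 := by omega
          rw [hje] at h
          have := hflag.2
          omega
      have hmem : j ∈ wB n (smB n x) := mem_wB_smB.mpr ⟨hj1, Or.inr h⟩
      rw [ph1_getD hj, if_neg (by omega), nvB_of_mem hj hmem]
      exact min_le_right _ _
    · exact le_trans (min_le_left _ _) h
  · intro w hw hm
    obtain ⟨hm1, hm2⟩ := meetB_facts hm
    have hKey := keyW (n := n) hw hm
    have hk'n : w.length = n := by
      by_contra hc
      have h1 := hw.1
      have h2 := hw.2.1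
      have hn2 : 2 ≤ n := by omega
      have hmem := mB_mem (S := smB n x) (n := n) (by rw [hmt]; omega)
      rw [hmt] at hmem
      have := (hKey _ hmem).1
      omega
    refine ⟨by rw [ph1_length, hk'n], ?_⟩
    intro j hj
    rw [ph1_length] at hj
    rw [ph1_getD hj]
    by_cases hje : j = n - 1
    · rw [if_pos hje]
      have hl := last_le hw
      rw [hk'n] at hl
      rw [hje]
      omega
    · rw [if_neg hje]
      rcases nvB_spec (W := wB n (smB n x)) (n := n) j with hs | ⟨w', hw', hjw', hw'n, he⟩
      · rw [hs]
        have hch := chainMono hw.2.2.2.1 j (n - 2) (by omega) (by omega)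
        have hp := hw.2.2.2.2.1 (by omega)
        rw [hk'n] at hp
        omega
      · rw [he]
        exact (hKey w' hw').2 j hjw'

lemma coreS {n : ℕ} (hn : 1 ≤ n) {x : List ℕ} (hx : IsHeightSeqB n x)
    (hflag : x.length = n ∧ x.getD (n - 1) 0 = n)
    (hmt : mB n (smB n x) ≠ n - 1) :
    IsPseudocomplementB n x (phS n (mB n (smB n x)) (wB n (smB n x))) := by
  obtain ⟨hk1, hkn, hup, hmono, hpen, hlast⟩ := hx
  have HW : ∀ w ∈ wB n (smB n x), w + 1 < n := fun w hw => by
    have := wB_mem_lt hw; omega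
  have hmle : mB n (smB n x) ≤ n - 1 := mB_le
  have hmn2 : mB n (smB n x) + 2 ≤ n := by omega
  have hstair : ∀ j, mB n (smB n x) ≤ j → j < n → x.getD j 0 = j + 1 := by
    intro j h1 h2
    rcases Nat.lt_or_ge j (n - 1) with hlt | hge
    · have hnm : j ∉ wB n (smB n x) := fun hmem => by have := le_mB hmem; omega
      have hA : ¬(x.length ≤ j ∨ j + 1 < x.getD j 0) :=
        fun hA => hnm (mem_wB_smB.mpr ⟨hlt, hA⟩)
      push_neg at hA
      have := hup j (by omega)
      omega
    · have hje : j = n - 1 := by omega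
      rw [hje, hflag.2]
      omega
  refine ⟨isHeight_phS HW hmn2 (fun h => mB_mem h), ⟨?_, ?_⟩, ?_⟩
  · rw [botB_length, phS_length, hflag.1]; exact le_max_left _ _
  · intro j hj
    rw [botB_length] at hj
    rw [botB_getD hj]
    rcases lt_trichotomy j (mB n (smB n x)) with hjm | hjm | hjm
    · have hjx : j < x.length := by omega
      rw [meetEntry_min hjx (by rw [phS_length]; omega)]
      rcases Nat.lt_or_ge (j + 1) (x.getD j 0) with h | h
      · have hmem : j ∈ wB n (smB n x) := mem_wB_smB.mpr ⟨by omega, Or.inr h⟩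
        rw [phS_getD (by omega), if_neg (by omega), nvB_of_mem (by omega) hmem]
        exact min_le_right _ _
      · exact le_trans (min_le_left _ _) h
    · have hxm : x.getD j 0 = j + 1 := hstair j (by omega) hj
      have hjx : j < x.length := by omega
      rw [meetEntry_min hjx (by rw [phS_length]; omega)]
      exact le_trans (min_le_left _ _) (le_of_eq hxm)
    · have hjx : j < x.length := by omega
      rw [meetEntry_left hjx (by rw [phS_length]; omega)]
      rw [hstair j (by omega) hj]
  · intro w hw hm
    obtain ⟨hm1, hm2⟩ := meetB_facts hm
    have hKey := keyW (n := n) hw hm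
    have hlen : mB n (smB n x) + 1 ≤ w.length := by
      rcases Nat.eq_zero_or_pos (mB n (smB n x)) with h0 | h0
      · rw [h0]; exact hw.1
      · have hmem := mB_mem (S := smB n x) (n := n) (by omega)
        have := (hKey _ hmem).1
        omega
    refine ⟨by rw [phS_length]; exact hlen, ?_⟩
    intro j hj
    rw [phS_length] at hj
    rw [phS_getD hj]
    by_cases hje : j = mB n (smB n x)
    · rw [if_pos hje]
      subst hje
      rcases eq_or_lt_of_le hlen with he | hlt
      · have hl := last_le hw
        rw [← he] at hl
        simp only [Nat.add_sub_cancel] at hl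
        omega
      · have hch := chainMono hw.2.2.2.1 (mB n (smB n x)) (w.length - 2) (by omega) (by omega)
        have hp := hw.2.2.2.2.1 (by omega)
        have hwn := hw.2.1
        omega
    · rw [if_neg hje]
      have hjm : j < mB n (smB n x) := by omega
      rcases nvB_spec (W := wB n (smB n x)) (n := n) j with hs | ⟨w', hw', hjw', hw'n, he⟩
      · have hmem := mB_mem (S := smB n x) (n := n) (by omega)
        have hle := nvB_le_of_mem (n := n) (w := mB n (smB n x) - 1) hmem (by omega) j (by omega)
        omega
      · rw [he]
        exact (hKey w' hw').2 j hjw'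

lemma pcB_spec {n : ℕ} (hn : 1 ≤ n) {x : List ℕ} (hx : IsHeightSeqB n x) :
    IsPseudocomplementB n x (phiB n (smB n x)) := by
  unfold phiB
  by_cases hf : (x.length = n ∧ x.getD (n - 1) 0 = n)
  · rw [if_pos ((mem_smB_top hn).mpr hf)]
    by_cases hmt : mB n (smB n x) = n - 1
    · rw [if_pos hmt]; exact core1 hn hx hf hmt
    · rw [if_neg hmt]; exact coreS hn hx hf hmt
  · rw [if_neg (fun h => hf ((mem_smB_top hn).mp h))]
    exact core0 hn hx hf

lemma domLeB_antisymm {a b : List ℕ} (h1 : DomLeB a b) (h2 : DomLeB b a) : a = b := by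
  obtain ⟨hl1, he1⟩ := h1
  obtain ⟨hl2, he2⟩ := h2
  have hl : a.length = b.length := le_antisymm hl2 hl1
  apply List.ext_getElem hl
  intro i hi1 hi2
  have e1 := he1 i (by omega)
  have e2 := he2 i (by omega)
  rw [List.getD_eq_getElem _ _ hi1, List.getD_eq_getElem _ _ hi2] at e1 e2
  omega

lemma pcB_unique {n : ℕ} {x z z' : List ℕ} (h : IsPseudocomplementB n x z)
    (h' : IsPseudocomplementB n x z') : z = z' :=
  domLeB_antisymm (h'.2.2 z h.1 h.2.1) (h.2.2 z' h'.1 h'.2.1)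

lemma wB_eq_self {n : ℕ} {S : Finset ℕ} (hS : S ⊆ Finset.range n) (htop : n - 1 ∉ S) :
    wB n S = S := by
  ext w
  simp only [wB, Finset.mem_filter]
  refine ⟨fun h => h.1, fun h => ⟨h, ?_⟩⟩
  have h1 := Finset.mem_range.mp (hS h)
  have h2 : w ≠ n - 1 := fun e => htop (e ▸ h)
  omega

lemma comp0 {n : ℕ} (hn : 1 ≤ n) {S : Finset ℕ} (hS : S ⊆ Finset.range n)
    (htop : n - 1 ∉ S) : smB n (ph0 n (wB n S)) = Finset.range n \ S := by
  have HW : ∀ w ∈ wB n S, w + 1 < n := fun w hw => by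
    have := wB_mem_lt hw; omega
  have hWS : wB n S = S := wB_eq_self hS htop
  unfold smB
  rw [if_pos (⟨ph0_length, by rw [ph0_getD (by omega), nvB_top HW]⟩ :
    (ph0 n (wB n S)).length = n ∧ (ph0 n (wB n S)).getD (n - 1) 0 = n)]
  ext w
  simp only [Finset.mem_union, Finset.mem_filter, Finset.mem_range, Finset.mem_singleton,
    Finset.mem_sdiff]
  constructor
  · rintro (⟨hw1, hw2⟩ | hw1)
    · refine ⟨by omega, fun hwS => ?_⟩
      have hmem : w ∈ wB n S := by rw [hWS]; exact hwS
      have hnv := nvB_of_mem (by omega : w < n) hmem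
      rcases hw2 with h | h
      · rw [ph0_length] at h; omega
      · rw [ph0_getD (by omega)] at h; omega
    · exact ⟨by omega, by rw [hw1]; exact htop⟩
  · rintro ⟨hw1, hw2⟩
    by_cases hwe : w = n - 1
    · right; exact hwe
    · left
      refine ⟨by omega, Or.inr ?_⟩
      rw [ph0_getD (by omega : w < n)]
      exact nvB_gt_of_notMem (by omega) (fun hmem => hw2 (hWS ▸ hmem))

lemma comp1 {n : ℕ} (hn : 1 ≤ n) {S : Finset ℕ} (hS : S ⊆ Finset.range n)
    (htop : n - 1 ∈ S) (hmt : mB n S = n - 1) :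
    smB n (ph1 n (wB n S)) = Finset.range n \ S := by
  have HW : ∀ w ∈ wB n S, w + 1 < n := fun w hw => by
    have := wB_mem_lt hw; omega
  unfold smB
  rw [if_neg (fun hf => by
    have h2 := hf.2
    rw [ph1_getD (by omega), if_pos rfl] at h2
    omega)]
  rw [Finset.union_empty]
  ext w
  simp only [Finset.mem_filter, Finset.mem_range, Finset.mem_sdiff]
  constructor
  · rintro ⟨hw1, hw2⟩
    refine ⟨by omega, fun hwS => ?_⟩
    have hmem : w ∈ wB n S := Finset.mem_filter.mpr ⟨hwS, hw1⟩
    rcases hw2 with h | h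
    · rw [ph1_length] at h; omega
    · rw [ph1_getD (by omega), if_neg (by omega), nvB_of_mem (by omega) hmem] at h
      omega
  · rintro ⟨hw1, hw2⟩
    have hwe : w ≠ n - 1 := fun e => hw2 (e ▸ htop)
    refine ⟨by omega, Or.inr ?_⟩
    rw [ph1_getD (by omega), if_neg (by omega)]
    exact nvB_gt_of_notMem (by omega) (fun hmem => hw2 (Finset.mem_filter.mp hmem).1)

lemma compS {n : ℕ} (hn : 1 ≤ n) {S : Finset ℕ} (hS : S ⊆ Finset.range n)
    (htop : n - 1 ∈ S) (hmt : mB n S ≠ n - 1) :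
    smB n (phS n (mB n S) (wB n S)) = Finset.range n \ S := by
  have HW : ∀ w ∈ wB n S, w + 1 < n := fun w hw => by
    have := wB_mem_lt hw; omega
  have hmle : mB n S ≤ n - 1 := mB_le
  have hmn2 : mB n S + 2 ≤ n := by omega
  unfold smB
  rw [if_neg (fun hf => by
    have h1 := hf.1
    rw [phS_length] at h1
    omega)]
  rw [Finset.union_empty]
  ext w
  simp only [Finset.mem_filter, Finset.mem_range, Finset.mem_sdiff]
  constructor
  · rintro ⟨hw1, hw2⟩
    refine ⟨by omega, fun hwS => ?_⟩
    have hmem : w ∈ wB n S := Finset.mem_filter.mpr ⟨hwS, hw1⟩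
    rcases Nat.lt_or_ge w (mB n S) with h | h
    · rcases hw2 with h' | h'
      · rw [phS_length] at h'; omega
      · rw [phS_getD (by omega), if_neg (by omega), nvB_of_mem (by omega) hmem] at h'
        omega
    · have := le_mB hmem; omega
  · rintro ⟨hw1, hw2⟩
    have hwe : w ≠ n - 1 := fun e => hw2 (e ▸ htop)
    refine ⟨by omega, ?_⟩
    rcases Nat.lt_or_ge w (mB n S) with h | h
    · right
      rw [phS_getD (by omega), if_neg (by omega)]
      exact nvB_gt_of_notMem (by omega) (fun hmem => hw2 (Finset.mem_filter.mp hmem).1)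
    · rcases eq_or_lt_of_le h with h' | h'
      · right
        rw [phS_getD (by omega), if_pos h'.symm]
        omega
      · left
        rw [phS_length]
        omega

lemma smB_phiB {n : ℕ} (hn : 1 ≤ n) {S : Finset ℕ} (hS : S ⊆ Finset.range n) :
    smB n (phiB n S) = Finset.range n \ S := by
  unfold phiB
  by_cases htop : n - 1 ∈ S
  · by_cases hmt : mB n S = n - 1
    · rw [if_pos htop, if_pos hmt]; exact comp1 hn hS htop hmt
    · rw [if_pos htop, if_neg hmt]; exact compS hn hS htop hmt
  · rw [if_neg htop]; exact comp0 hn hS htop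

lemma isHeight_phiB {n : ℕ} (hn : 1 ≤ n) (S : Finset ℕ) : IsHeightSeqB n (phiB n S) := by
  have HW : ∀ w ∈ wB n S, w + 1 < n := fun w hw => by
    have := wB_mem_lt hw; omega
  unfold phiB
  split_ifs with h1 h2
  · exact isHeight_ph1 hn HW
  · have hmle : mB n S ≤ n - 1 := mB_le
    exact isHeight_phS HW (by omega) (fun h => mB_mem h)
  · exact isHeight_ph0 hn HW

lemma smB_subset {n : ℕ} (hn : 1 ≤ n) (x : List ℕ) : smB n x ⊆ Finset.range n := by
  intro w hw
  unfold smB at hw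
  rcases Finset.mem_union.mp hw with h | h
  · have := (Finset.mem_filter.mp h).1
    rw [Finset.mem_range] at *
    omega
  · by_cases hf : (x.length = n ∧ x.getD (n - 1) 0 = n)
    · rw [if_pos hf, Finset.mem_singleton] at h
      rw [Finset.mem_range]
      omega
    · rw [if_neg hf] at h
      exact absurd h (Finset.notMem_empty w)

theorem card_regular_dyckB (n : ℕ) (hn : 0 < n) :
    {h : List ℕ | IsHeightSeqB n h ∧
      ∃ hc hcc : List ℕ, IsPseudocomplementB n h hc ∧
        IsPseudocomplementB n hc hcc ∧ hcc = h}.ncard = 2 ^ n := by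
  have hn1 : 1 ≤ n := hn
  have hset : {h : List ℕ | IsHeightSeqB n h ∧
      ∃ hc hcc : List ℕ, IsPseudocomplementB n h hc ∧
        IsPseudocomplementB n hc hcc ∧ hcc = h} =
      phiB n '' ↑((Finset.range n).powerset) := by
    ext h
    simp only [Set.mem_setOf_eq, Set.mem_image, Finset.coe_powerset, Set.mem_preimage,
      Set.mem_powerset_iff, Finset.coe_subset, Finset.mem_coe, Finset.mem_powerset]
    constructor
    · rintro ⟨hh, hc, hcc, h1, h2, h3⟩
      have hz := pcB_spec hn1 hh
      have e1 : hc = phiB n (smB n h) := pcB_unique h1 hz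
      have hS0 : smB n h ⊆ Finset.range n := smB_subset hn1 h
      have hz' := pcB_spec hn1 (isHeight_phiB hn1 (smB n h))
      rw [smB_phiB hn1 hS0] at hz'
      rw [e1] at h2
      have e2 : hcc = phiB n (Finset.range n \ smB n h) := pcB_unique h2 hz'
      exact ⟨Finset.range n \ smB n h, by intro a ha; exact (Finset.mem_sdiff.mp ha).1,
        by rw [← e2, h3]⟩
    · rintro ⟨S, hS, rfl⟩
      refine ⟨isHeight_phiB hn1 S, phiB n (Finset.range n \ S), phiB n S, ?_, ?_, rfl⟩
      · have hz := pcB_spec hn1 (isHeight_phiB hn1 S)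
        rwa [smB_phiB hn1 hS] at hz
      · have hz := pcB_spec hn1 (isHeight_phiB hn1 (Finset.range n \ S))
        rw [smB_phiB hn1 (by intro a ha; exact (Finset.mem_sdiff.mp ha).1)] at hz
        rwa [Finset.sdiff_sdiff_eq_self hS] at hz
  rw [hset, Set.ncard_image_of_injOn, Set.ncard_coe_finset, Finset.card_powerset,
    Finset.card_range]
  intro S hS T hT he
  rw [Finset.mem_coe, Finset.mem_powerset] at hS hT
  have h1 := smB_phiB hn1 hS
  have h2 := smB_phiB hn1 hT
  rw [he, h2] at h1
  calc S = Finset.range n \ (Finset.range n \ S) :=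
        (Finset.sdiff_sdiff_eq_self hS).symm
    _ = Finset.range n \ (Finset.range n \ T) := by rw [← h1]
    _ = T := Finset.sdiff_sdiff_eq_self hT
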